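/- For 0 ≤ r ≤ 1/3 and all real x, R̃'(x) = (1 − 4r·cos x + 3r²)/((cos x − r)² + sin² x) ≥ 0, with equality only when r = 1/3 and cos x = 1. Consequently R̃ is monotone nondecreasing on ℝ. -/

import Mathlib

open Real

/-- The incident angle function of the off-center reflection. -/
noncomputable def iota (r x : ℝ) : ℝ :=
  Complex.arg ((Real.cos x - r : ℝ) + (Real.sin x : ℝ) * Complex.I) - x

/-- Lift of the off-center reflection taking 0 to Ω. -/
noncomputable def Rt (r Ω x : ℝ) : ℝ := x + Ω - 2 * iota r x

/-- Smooth branch of the angle `arg (1 - r e^{-ix})`. -/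
noncomputable def gg (r x : ℝ) : ℝ := Real.arctan (r * Real.sin x / (1 - r * Real.cos x))

lemma u_pos {r : ℝ} (hr0 : 0 ≤ r) (hr1 : r ≤ 1 / 3) (x : ℝ) :
    0 < 1 - r * Real.cos x := by
  nlinarith [Real.cos_le_one x, Real.neg_one_le_cos x]

lemma den_pos {r : ℝ} (hr0 : 0 ≤ r) (hr1 : r ≤ 1 / 3) (x : ℝ) :
    0 < 1 - 2 * r * Real.cos x + r ^ 2 := by
  nlinarith [Real.cos_le_one x, Real.neg_one_le_cos x]

lemma hasDerivAt_gg {r : ℝ} (hr0 : 0 ≤ r) (hr1 : r ≤ 1 / 3) (x : ℝ) :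
    HasDerivAt (gg r) ((r * Real.cos x - r ^ 2) / (1 - 2 * r * Real.cos x + r ^ 2)) x := by
  have hu : (1 : ℝ) - r * Real.cos x ≠ 0 := (u_pos hr0 hr1 x).ne'
  have hden := den_pos hr0 hr1 x
  have hs := Real.sin_sq_add_cos_sq x
  have h1 : HasDerivAt (fun x => r * Real.sin x) (r * Real.cos x) x :=
    (Real.hasDerivAt_sin x).const_mul r
  have h2 : HasDerivAt (fun x => 1 - r * Real.cos x) (r * Real.sin x) x := by
    have := ((Real.hasDerivAt_cos x).const_mul r).const_sub 1
    exact this.congr_deriv (by ring)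
  have h3 := (h1.div h2 hu).arctan
  refine h3.congr_deriv ?_
  simp only [Pi.div_apply]
  have e1 : r * Real.cos x * (1 - r * Real.cos x) - r * Real.sin x * (r * Real.sin x)
      = r * Real.cos x - r ^ 2 := by
    linear_combination (-(r ^ 2)) * hs
  have e2 : (1 - r * Real.cos x) ^ 2 + (r * Real.sin x) ^ 2
      = 1 - 2 * r * Real.cos x + r ^ 2 := by
    linear_combination r ^ 2 * hs
  have hne : ((1 - r * Real.cos x) ^ 2 + (r * Real.sin x) ^ 2) ≠ 0 := by
    rw [e2]; exact hden.ne'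
  rw [← e1, ← e2]
  field_simp

lemma mono_H {r : ℝ} (hr0 : 0 ≤ r) (hr1 : r ≤ 1 / 3) :
    Monotone (fun x => x - 2 * gg r x) := by
  have hd : ∀ x : ℝ, HasDerivAt (fun x => x - 2 * gg r x)
      (1 - 2 * ((r * Real.cos x - r ^ 2) / (1 - 2 * r * Real.cos x + r ^ 2))) x := by
    intro x
    exact (hasDerivAt_id x).sub (((hasDerivAt_gg hr0 hr1 x)).const_mul 2)
  apply monotone_of_deriv_nonneg (fun x => (hd x).differentiableAt)
  intro x
  rw [(hd x).deriv]
  have hden := den_pos hr0 hr1 x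
  have h2 : 2 * ((r * Real.cos x - r ^ 2) / (1 - 2 * r * Real.cos x + r ^ 2))
      = (2 * (r * Real.cos x - r ^ 2)) / (1 - 2 * r * Real.cos x + r ^ 2) := by ring
  rw [sub_nonneg, h2, div_le_one hden]
  nlinarith [Real.cos_le_one x, Real.neg_one_le_cos x]

lemma mono_theta {r : ℝ} (hr0 : 0 ≤ r) (hr1 : r ≤ 1 / 3) :
    Monotone (fun x => x + gg r x) := by
  have hd : ∀ x : ℝ, HasDerivAt (fun x => x + gg r x)
      (1 + (r * Real.cos x - r ^ 2) / (1 - 2 * r * Real.cos x + r ^ 2)) x := by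
    intro x
    exact (hasDerivAt_id x).add (hasDerivAt_gg hr0 hr1 x)
  apply monotone_of_deriv_nonneg (fun x => (hd x).differentiableAt)
  intro x
  rw [(hd x).deriv]
  have hden := den_pos hr0 hr1 x
  have h : -1 ≤ (r * Real.cos x - r ^ 2) / (1 - 2 * r * Real.cos x + r ^ 2) := by
    rw [le_div_iff₀ hden]
    nlinarith [u_pos hr0 hr1 x]
  linarith

/-- The polar decomposition of the point `e^{ix} - r`. -/
lemma arg_formula {r : ℝ} (hr0 : 0 ≤ r) (hr1 : r ≤ 1 / 3) (x : ℝ) :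
    Complex.arg ((Real.cos x - r : ℝ) + (Real.sin x : ℝ) * Complex.I)
      = (x + gg r x) + 2 * π * ⌊(π - (x + gg r x)) / (2 * π)⌋ := by
  have hu : (0 : ℝ) < 1 - r * Real.cos x := u_pos hr0 hr1 x
  set u : ℝ := 1 - r * Real.cos x with hu_def
  set v : ℝ := r * Real.sin x with hv_def
  set ρ : ℝ := Real.sqrt (u ^ 2 + v ^ 2) with hρ_def
  have hρ : 0 < ρ := Real.sqrt_pos.2 (by positivity)
  have hρsq : ρ ^ 2 = u ^ 2 + v ^ 2 := Real.sq_sqrt (by positivity)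
  set θ : ℝ := x + gg r x with hθ_def
  have hs := Real.sin_sq_add_cos_sq x
  have hsqrt : Real.sqrt (1 + (v / u) ^ 2) = ρ / u := by
    rw [show 1 + (v / u) ^ 2 = (ρ / u) ^ 2 by
      rw [div_pow, div_pow, hρsq]
      field_simp]
    exact Real.sqrt_sq (by positivity)
  have hcos : Real.cos (gg r x) = u / ρ := by
    rw [gg, ← hv_def, ← hu_def, Real.cos_arctan, hsqrt]
    field_simp
  have hsin : Real.sin (gg r x) = v / ρ := by
    rw [gg, ← hv_def, ← hu_def, Real.sin_arctan, hsqrt]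
    field_simp
  have hre : Real.cos x - r = ρ * Real.cos θ := by
    rw [hθ_def, Real.cos_add, hcos, hsin]
    field_simp
    linear_combination r * hs
  have him : Real.sin x = ρ * Real.sin θ := by
    rw [hθ_def, Real.sin_add, hcos, hsin]
    field_simp
    ring
  have key : ((Real.cos x - r : ℝ) + (Real.sin x : ℝ) * Complex.I)
      = (ρ : ℂ) * ((Real.cos θ : ℝ) + (Real.sin θ : ℝ) * Complex.I) := by
    rw [hre, him]
    push_cast
    ring
  rw [key]
  have h2 := Complex.arg_mul_cos_add_sin_mul_I_sub hρ θ
  rw [← Complex.ofReal_cos, ← Complex.ofReal_sin] at h2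
  linarith

theorem stmt_3 (r : ℝ) (hr0 : 0 ≤ r) (hr1 : r ≤ 1 / 3) (Ω : ℝ) :
    (∀ x : ℝ,
      0 ≤ (1 - 4 * r * Real.cos x + 3 * r ^ 2) /
          ((Real.cos x - r) ^ 2 + (Real.sin x) ^ 2) ∧
      ((1 - 4 * r * Real.cos x + 3 * r ^ 2) /
          ((Real.cos x - r) ^ 2 + (Real.sin x) ^ 2) = 0 →
        r = 1 / 3 ∧ Real.cos x = 1)) ∧
    Monotone (Rt r Ω) := by
  constructor
  · intro x
    have hs := Real.sin_sq_add_cos_sq x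
    have hc1 := Real.cos_le_one x
    have hc2 := Real.neg_one_le_cos x
    have hden : 0 < (Real.cos x - r) ^ 2 + (Real.sin x) ^ 2 := by nlinarith
    have hnum : 0 ≤ 1 - 4 * r * Real.cos x + 3 * r ^ 2 := by nlinarith
    refine ⟨div_nonneg hnum hden.le, fun h => ?_⟩
    have hnum0 : 1 - 4 * r * Real.cos x + 3 * r ^ 2 = 0 := by
      rcases div_eq_zero_iff.1 h with h' | h'
      · exact h'
      · exact absurd h' hden.ne'
    have hr3 : r = 1 / 3 := by
      have h1 : (1 - r) * (1 - 3 * r) ≤ 0 := by nlinarith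
      have h2 : 0 ≤ (1 - r) * (1 - 3 * r) := by nlinarith
      have h3 : (1 - r) * (1 - 3 * r) = 0 := le_antisymm h1 h2
      rcases mul_eq_zero.1 h3 with h4 | h4
      · linarith
      · linarith
    refine ⟨hr3, ?_⟩
    rw [hr3] at hnum0
    linarith
  · have hrw : Rt r Ω = fun x =>
        ((x - 2 * gg r x) + Ω) +
          (4 * π) * (-(⌊(π - (x + gg r x)) / (2 * π)⌋ : ℝ)) := by
      funext x
      rw [Rt, iota, arg_formula hr0 hr1 x]
      push_cast
      ring
    rw [hrw]
    have hmono1 : Monotone (fun x : ℝ => (x - 2 * gg r x) + Ω) :=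
      fun a b hab => by simpa using add_le_add_right (mono_H hr0 hr1 hab) Ω
    have hmono2 : Monotone (fun x : ℝ =>
        (4 * π) * (-(⌊(π - (x + gg r x)) / (2 * π)⌋ : ℝ))) := by
      intro a b hab
      have hθ := mono_theta hr0 hr1 hab
      have h2π : (0 : ℝ) < 2 * π := Real.two_pi_pos
      have hfl : ⌊(π - (b + gg r b)) / (2 * π)⌋ ≤ ⌊(π - (a + gg r a)) / (2 * π)⌋ := by
        apply Int.floor_le_floor
        have hab' : a + gg r a ≤ b + gg r b := hθ
        have hnum2 : π - (b + gg r b) ≤ π - (a + gg r a) := by linarith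
        exact (div_le_div_iff_of_pos_right h2π).mpr hnum2
      have hneg : (-(⌊(π - (a + gg r a)) / (2 * π)⌋ : ℝ)) ≤
          (-(⌊(π - (b + gg r b)) / (2 * π)⌋ : ℝ)) := by
        simp only [neg_le_neg_iff]
        exact_mod_cast hfl
      have h4π : (0 : ℝ) ≤ 4 * π := by positivity
      exact mul_le_mul_of_nonneg_left hneg h4π
    exact hmono1.add hmono2
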